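/- Let F ⊂ ℝ^n be the feasible adversary strategy region and f(b) = q_1·b_1 + ∑_{i=2}^n q_i·b_i·∏_{j=1}^{i−1} ℓ_j/(ℓ_j−1) a linear objective with nonnegative coefficients q_i ≥ 0. Then the maximum of f over F is attained at a point of F* := ∪_{i=1}^n A_i, where A_i = { b ∈ F : b_i ≥ b'_i for all b' ∈ F }. That is, max_{b∈F} f(b) = max_{b∈F*} f(b). -/
import Mathlib

set_option maxHeartbeats 1000000 in
/-- Theorem 3 of the paper: the linear objective
`f(b) = ∑ i q_i · b_i · ∏_{j<i} ℓ_j/(ℓ_j−1)` attains its maximum over the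
feasible region `F` at a point of `F* = ⋃ i A_i`, where `A_i` is the set of
feasible strategies maximizing the `i`-th coordinate. -/
theorem stmt_14 (n : ℕ) (hn : 2 ≤ n) (M : ℝ) (hM : 0 < M)
    (ℓ : ℕ → ℝ) (hℓ : ∀ j, 2 ≤ ℓ j)
    (q : Fin n → ℝ) (hq : ∀ i, 0 ≤ q i)
    (F : Set (Fin n → ℝ))
    (hF : F = {b : Fin n → ℝ |
      (∑ i, b i) = 1 ∧ (∀ i, 0 ≤ b i) ∧
      b ⟨0, by omega⟩ ≤ min 1 M ∧
      ∀ m : ℕ, ∀ h : m + 1 < n,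
        b ⟨m + 1, h⟩ ≤ ((ℓ m - 1) / ℓ m) * b ⟨m, by omega⟩})
    (hne : F.Nonempty)
    (f : (Fin n → ℝ) → ℝ)
    (hf : ∀ b, f b = ∑ i : Fin n, q i * b i * ∏ j ∈ Finset.range i, ℓ j / (ℓ j - 1))
    (A : Fin n → Set (Fin n → ℝ))
    (hA : ∀ i, A i = {b | b ∈ F ∧ ∀ b' ∈ F, b' i ≤ b i}) :
    ∃ b ∈ ⋃ i : Fin n, A i, ∀ b' ∈ F, f b' ≤ f b := by
  classical
  have h0n : 0 < n := by omega
  set μ := min 1 M with hμdef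
  have hμ : 0 < μ := lt_min one_pos hM
  have hℓpos : ∀ j, 0 < ℓ j := fun j => lt_of_lt_of_le two_pos (hℓ j)
  have hℓ1 : ∀ j, 0 < ℓ j - 1 := fun j => by have := hℓ j; linarith
  have hrpos : ∀ j, 0 < (ℓ j - 1) / ℓ j := fun j => div_pos (hℓ1 j) (hℓpos j)
  set P : ℕ → ℝ := fun m => ∏ j ∈ Finset.range m, (ℓ j - 1) / ℓ j with hPdef
  have hPpos : ∀ m, 0 < P m := fun m => Finset.prod_pos fun j _ => hrpos j
  have hP0 : P 0 = 1 := by simp [hPdef]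
  have hPsucc : ∀ m, P (m + 1) = P m * ((ℓ m - 1) / ℓ m) := fun m => by
    simp only [hPdef]; exact Finset.prod_range_succ _ m
  have hinv : ∀ m : ℕ, (∏ j ∈ Finset.range m, ℓ j / (ℓ j - 1)) = (P m)⁻¹ := by
    intro m
    rw [hPdef, ← Finset.prod_inv_distrib]
    exact Finset.prod_congr rfl fun j _ => (inv_div _ _).symm
  -- membership characterization
  have hFmem : ∀ b : Fin n → ℝ, b ∈ F ↔ ((∑ i, b i) = 1 ∧ (∀ i, 0 ≤ b i) ∧
      b ⟨0, h0n⟩ ≤ μ ∧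
      ∀ m : ℕ, ∀ h : m + 1 < n,
        b ⟨m + 1, h⟩ ≤ ((ℓ m - 1) / ℓ m) * b ⟨m, by omega⟩) := by
    intro b; rw [hF]; exact Iff.rfl
  -- the rescaled coordinates
  set U : (Fin n → ℝ) → ℕ → ℝ := fun b m => if h : m < n then b ⟨m, h⟩ / P m else 0
    with hUdef
  have hUval : ∀ b : Fin n → ℝ, ∀ m, ∀ h : m < n, U b m = b ⟨m, h⟩ / P m := by
    intro b m h; simp only [hUdef, dif_pos h]
  have hUzero : ∀ b : Fin n → ℝ, ∀ m, n ≤ m → U b m = 0 := by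
    intro b m h; simp only [hUdef, dif_neg (by omega : ¬ m < n)]
  have hbval : ∀ b : Fin n → ℝ, ∀ m, ∀ h : m < n, b ⟨m, h⟩ = P m * U b m := by
    intro b m h; rw [hUval b m h, mul_comm, div_mul_cancel₀ _ (hPpos m).ne']
  have hbval' : ∀ b : Fin n → ℝ, ∀ i : Fin n, b i = P i.val * U b i.val := by
    intro b i
    have := hbval b i.val i.isLt
    simpa [Fin.eta] using this
  set qn : ℕ → ℝ := fun m => if h : m < n then q ⟨m, h⟩ else 0 with hqndef
  have hfU : ∀ b : Fin n → ℝ, f b = ∑ m ∈ Finset.range n, qn m * U b m := by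
    intro b
    rw [hf, ← Fin.sum_univ_eq_sum_range (fun m => qn m * U b m) n]
    refine Finset.sum_congr rfl fun i _ => ?_
    rw [hinv i.val]
    have h1 : qn i.val = q i := by simp only [hqndef, dif_pos i.isLt, Fin.eta]
    rw [h1, hbval' b i]
    calc q i * (P i.val * U b i.val) * (P i.val)⁻¹
        = (q i * U b i.val) * (P i.val * (P i.val)⁻¹) := by ring
      _ = q i * U b i.val := by rw [mul_inv_cancel₀ (hPpos _).ne', mul_one]
  -- facts about U for feasible points
  have hUnn : ∀ b ∈ F, ∀ m, 0 ≤ U b m := by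
    intro b hb m
    obtain ⟨hsum, hnn, h0, hchain⟩ := (hFmem b).1 hb
    by_cases h : m < n
    · rw [hUval b m h]; exact div_nonneg (hnn _) (hPpos m).le
    · rw [hUzero b m (by omega)]
  have hUanti : ∀ b ∈ F, ∀ m, U b (m + 1) ≤ U b m := by
    intro b hb m
    obtain ⟨hsum, hnn, h0, hchain⟩ := (hFmem b).1 hb
    by_cases h : m + 1 < n
    · rw [hUval b (m+1) h, hUval b m (by omega)]
      rw [div_le_div_iff₀ (hPpos _) (hPpos _), hPsucc m]
      have hc := hchain m h
      have hPm := hPpos m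
      nlinarith [hrpos m]
    · rw [hUzero b (m+1) (by omega)]
      exact hUnn b hb m
  have hUanti' : ∀ b ∈ F, ∀ a c : ℕ, a ≤ c → U b c ≤ U b a := by
    intro b hb a c hac
    exact antitone_nat_of_succ_le (hUanti b hb) hac
  have hUsum : ∀ b ∈ F, ∑ m ∈ Finset.range n, P m * U b m = 1 := by
    intro b hb
    obtain ⟨hsum, hnn, h0, hchain⟩ := (hFmem b).1 hb
    calc ∑ m ∈ Finset.range n, P m * U b m
        = ∑ i : Fin n, P i.val * U b i.val := (Fin.sum_univ_eq_sum_range _ n).symm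
      _ = ∑ i, b i := Finset.sum_congr rfl fun i _ => (hbval' b i).symm
      _ = 1 := hsum
  -- compactness of F
  have hFclosed : IsClosed F := by
    rw [hF]
    have e : {b : Fin n → ℝ |
        (∑ i, b i) = 1 ∧ (∀ i, 0 ≤ b i) ∧
        b ⟨0, h0n⟩ ≤ μ ∧
        ∀ m : ℕ, ∀ h : m + 1 < n,
          b ⟨m + 1, h⟩ ≤ ((ℓ m - 1) / ℓ m) * b ⟨m, by omega⟩} =
        {b : Fin n → ℝ | (∑ i, b i) = 1} ∩ ((⋂ i : Fin n, {b : Fin n → ℝ | 0 ≤ b i}) ∩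
        ({b : Fin n → ℝ | b ⟨0, h0n⟩ ≤ μ} ∩
        (⋂ m : ℕ, {b : Fin n → ℝ | ∀ h : m + 1 < n,
          b ⟨m + 1, h⟩ ≤ ((ℓ m - 1) / ℓ m) * b ⟨m, by omega⟩}))) := by
      ext b
      simp only [Set.mem_setOf_eq, Set.mem_inter_iff, Set.mem_iInter]
    rw [e]
    refine IsClosed.inter (isClosed_eq (by fun_prop) continuous_const)
      (IsClosed.inter (isClosed_iInter fun i => isClosed_le continuous_const (continuous_apply i))
      (IsClosed.inter (isClosed_le (continuous_apply _) continuous_const)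
      (isClosed_iInter fun m => ?_)))
    by_cases h : m + 1 < n
    · have e2 : {b : Fin n → ℝ | ∀ h : m + 1 < n,
          b ⟨m + 1, h⟩ ≤ ((ℓ m - 1) / ℓ m) * b ⟨m, by omega⟩} =
          {b : Fin n → ℝ | b ⟨m + 1, h⟩ ≤ ((ℓ m - 1) / ℓ m) * b ⟨m, by omega⟩} := by
        ext b; simp only [Set.mem_setOf_eq]
        exact ⟨fun H => H h, fun H _ => H⟩
      rw [e2]
      exact isClosed_le (continuous_apply _) (continuous_const.mul (continuous_apply _))
    · have e2 : {b : Fin n → ℝ | ∀ h : m + 1 < n,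
          b ⟨m + 1, h⟩ ≤ ((ℓ m - 1) / ℓ m) * b ⟨m, by omega⟩} = Set.univ := by
        ext b; simp only [Set.mem_setOf_eq, Set.mem_univ, iff_true]
        intro h'; exact absurd h' h
      rw [e2]; exact isClosed_univ
  have hFsub : F ⊆ Metric.closedBall (0 : Fin n → ℝ) 1 := by
    intro b hb
    obtain ⟨hsum, hnn, h0, hchain⟩ := (hFmem b).1 hb
    rw [Metric.mem_closedBall, dist_zero_right]
    refine (pi_norm_le_iff_of_nonneg (by norm_num)).2 fun i => ?_
    rw [Real.norm_eq_abs, abs_of_nonneg (hnn i)]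
    calc b i ≤ ∑ j, b j := Finset.single_le_sum (fun j _ => hnn j) (Finset.mem_univ i)
      _ = 1 := hsum
  have hFcomp : IsCompact F :=
    (isCompact_closedBall (0 : Fin n → ℝ) 1).of_isClosed_subset hFclosed hFsub
  have hfcont : Continuous f := by
    have : f = fun b => ∑ i : Fin n, q i * b i * ∏ j ∈ Finset.range i, ℓ j / (ℓ j - 1) :=
      funext hf
    rw [this]
    exact continuous_finset_sum _ fun i _ =>
      (continuous_const.mul (continuous_apply i)).mul continuous_const
  -- a maximizer of f over F
  obtain ⟨b0, hb0F, hb0max⟩ := hFcomp.exists_isMaxOn hne hfcont.continuousOn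
  set Opt : Set (Fin n → ℝ) := F ∩ {b | f b = f b0} with hOptdef
  have hOptcomp : IsCompact Opt := hFcomp.inter_right (isClosed_eq hfcont continuous_const)
  have hOptne : Opt.Nonempty := ⟨b0, hb0F, rfl⟩
  obtain ⟨c, hcOpt, hcmax⟩ := hOptcomp.exists_isMaxOn hOptne (continuous_apply (⟨0, h0n⟩ : Fin n)).continuousOn
  have hcF : c ∈ F := hcOpt.1
  have hcf : f c = f b0 := hcOpt.2
  have hopt : ∀ b' ∈ F, f b' ≤ f c := fun b' hb' => by
    rw [hcf]; exact hb0max hb'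
  obtain ⟨hcsum, hcnn, hc0, hcchain⟩ := (hFmem c).1 hcF
  -- Case 1: c 0 = μ
  by_cases hcase : c ⟨0, h0n⟩ = μ
  · refine ⟨c, Set.mem_iUnion.2 ⟨⟨0, h0n⟩, ?_⟩, hopt⟩
    rw [hA]
    refine ⟨hcF, fun b' hb' => ?_⟩
    obtain ⟨_, _, h0', _⟩ := (hFmem b').1 hb'
    rw [hcase]; exact h0'
  -- Case 2: c 0 < μ
  have hc0lt : c ⟨0, h0n⟩ < μ := lt_of_le_of_ne hc0 hcase
  have hU0 : U c 0 = c ⟨0, h0n⟩ := by rw [hUval c 0 h0n, hP0, div_one]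
  -- the last positive coordinate k
  have hex : ∃ m ∈ Finset.range n, 0 < U c m := by
    by_contra h
    push_neg at h
    have hle : ∑ m ∈ Finset.range n, P m * U c m ≤ 0 :=
      Finset.sum_nonpos fun m hm => mul_nonpos_of_nonneg_of_nonpos (hPpos m).le (h m hm)
    rw [hUsum c hcF] at hle; linarith
  set S : Finset ℕ := (Finset.range n).filter (fun m => 0 < U c m) with hSdef
  have hSne : S.Nonempty := by
    obtain ⟨m, hm, h⟩ := hex
    exact ⟨m, Finset.mem_filter.2 ⟨hm, h⟩⟩
  set k : ℕ := S.max' hSne with hkdef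
  have hkS : k ∈ S := S.max'_mem hSne
  have hkn : k < n := Finset.mem_range.1 (Finset.mem_filter.1 hkS).1
  have hUk : 0 < U c k := (Finset.mem_filter.1 hkS).2
  have hafter : ∀ m, k < m → U c m = 0 := by
    intro m hm
    by_cases h : m < n
    · by_contra hne'
      have : 0 < U c m := lt_of_le_of_ne (hUnn c hcF m) (Ne.symm hne')
      have : m ∈ S := Finset.mem_filter.2 ⟨Finset.mem_range.2 h, this⟩
      have := S.le_max' m this
      omega
    · exact hUzero c m (by omega)
  -- T partial sums
  set T : ℕ → ℝ := fun m => ∑ i ∈ Finset.range (m + 1), P i with hTdef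
  have hTpos : ∀ m, 0 < T m := fun m =>
    Finset.sum_pos (fun i _ => hPpos i) (by simp)
  have hTval : ∀ a c' : ℕ, a ≤ c' →
      ∑ i ∈ Finset.Ico (a + 1) (c' + 1), P i = T c' - T a := by
    intro a c' h
    rw [Finset.sum_Ico_eq_sub _ (by omega)]
  by_cases hconst : U c k = U c 0
  -- Subcase: U constant on the support prefix : c maximizes coordinate k
  · have hconstall : ∀ i, i ≤ k → U c i = U c k := by
      intro i hik
      have h1 : U c k ≤ U c i := hUanti' c hcF i k hik
      have h2 : U c i ≤ U c 0 := hUanti' c hcF 0 i (by omega)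
      rw [hconst]; linarith
    refine ⟨c, Set.mem_iUnion.2 ⟨⟨k, hkn⟩, ?_⟩, hopt⟩
    rw [hA]
    refine ⟨hcF, fun b' hb' => ?_⟩
    have hnn' := hUnn b' hb'
    have hanti' := hUanti' b' hb'
    have hsum' := hUsum b' hb'
    have step1 : U b' k * T k ≤ ∑ i ∈ Finset.range (k + 1), P i * U b' i := by
      rw [hTdef]
      rw [Finset.mul_sum]
      refine Finset.sum_le_sum fun i hi => ?_
      have hik : i ≤ k := by have := Finset.mem_range.1 hi; omega
      have := hanti' i k hik
      nlinarith [hPpos i]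
    have step2 : ∑ i ∈ Finset.range (k + 1), P i * U b' i ≤
        ∑ i ∈ Finset.range n, P i * U b' i := by
      refine Finset.sum_le_sum_of_subset_of_nonneg
        (Finset.range_subset_range.2 (by omega)) fun i _ _ => ?_
      exact mul_nonneg (hPpos i).le (hnn' i)
    have step3 : ∑ i ∈ Finset.range n, P i * U c i =
        ∑ i ∈ Finset.range (k + 1), P i * U c i := by
      symm
      refine Finset.sum_subset (Finset.range_subset_range.2 (by omega)) fun i _ hi => ?_
      have hik : k < i := by
        rcases Nat.lt_or_ge i (k + 1) with h | h
        · exact absurd (Finset.mem_range.2 h) hi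
        · omega
      rw [hafter i hik, mul_zero]
    have step4 : ∑ i ∈ Finset.range (k + 1), P i * U c i = U c k * T k := by
      rw [hTdef, Finset.mul_sum]
      refine Finset.sum_congr rfl fun i hi => ?_
      have hik : i ≤ k := by have := Finset.mem_range.1 hi; omega
      rw [hconstall i hik]; ring
    have hkey : U b' k ≤ U c k := by
      have h1 : U b' k * T k ≤ U c k * T k := by
        calc U b' k * T k ≤ ∑ i ∈ Finset.range n, P i * U b' i := le_trans step1 step2
          _ = 1 := hsum'
          _ = ∑ i ∈ Finset.range n, P i * U c i := (hUsum c hcF).symm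
          _ = U c k * T k := by rw [step3, step4]
      exact le_of_mul_le_mul_right h1 (hTpos k)
    rw [hbval b' k hkn, hbval c k hkn]
    have := hPpos k
    nlinarith
  -- Subcase: not constant: derive a contradiction with optimality
  · exfalso
    have hUk0 : U c k < U c 0 :=
      lt_of_le_of_ne (hUanti' c hcF 0 k (by omega)) hconst
    have hkpos : k ≠ 0 := by
      intro h; rw [h] at hconst; exact hconst rfl
    have hex2 : ∃ m, U c (m + 1) < U c 0 := by
      refine ⟨k - 1, ?_⟩
      have h1 : k - 1 + 1 = k := by omega
      rw [h1]; exact hUk0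
    set j : ℕ := Nat.find hex2 with hjdef
    have hj1 : U c (j + 1) < U c 0 := Nat.find_spec hex2
    have hjmin : ∀ m, m < j → ¬ U c (m + 1) < U c 0 := fun m hm => Nat.find_min hex2 hm
    have hUj : U c 0 ≤ U c j := by
      rcases Nat.eq_zero_or_pos j with h | h
      · rw [h]
      · have h2 := hjmin (j - 1) (by omega)
        push_neg at h2
        have h3 : j - 1 + 1 = j := by omega
        rwa [h3] at h2
    have hjk : j < k := by
      by_contra h
      push_neg at h
      have h2 := hjmin (k - 1) (by omega)
      push_neg at h2
      have h3 : k - 1 + 1 = k := by omega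
      rw [h3] at h2
      linarith
    have hsj : U c (j + 1) < U c j := lt_of_lt_of_le hj1 hUj
    have hTjk : T j < T k := by
      rw [hTdef]
      refine Finset.sum_lt_sum_of_subset (Finset.range_subset_range.2 (by omega : j + 1 ≤ k + 1))
        (Finset.mem_range.2 (by omega : j + 1 < k + 1)) (by simp) (hPpos (j + 1))
        fun i _ _ => (hPpos i).le
    -- the exchange direction
    set d : ℕ → ℝ := fun m => if m ≤ j then T k - T j else if m ≤ k then -T j else 0
      with hddef
    have hd1 : ∀ m, m ≤ j → d m = T k - T j := by
      intro m h; simp only [hddef, if_pos h]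
    have hd2 : ∀ m, j < m → m ≤ k → d m = -T j := by
      intro m h h'; simp only [hddef, if_neg (by omega : ¬ m ≤ j), if_pos h']
    have hd3 : ∀ m, k < m → d m = 0 := by
      intro m h
      simp only [hddef, if_neg (by omega : ¬ m ≤ j), if_neg (by omega : ¬ m ≤ k)]
    have hPD : ∑ m ∈ Finset.range n, P m * d m = 0 := by
      rw [Finset.range_eq_Ico,
        ← Finset.sum_Ico_consecutive _ (by omega : 0 ≤ k + 1) (by omega : k + 1 ≤ n),
        ← Finset.sum_Ico_consecutive _ (by omega : 0 ≤ j + 1) (by omega : j + 1 ≤ k + 1)]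
      have e1 : ∑ m ∈ Finset.Ico 0 (j + 1), P m * d m = T j * (T k - T j) := by
        rw [show Finset.Ico 0 (j+1) = Finset.range (j+1) by rw [Finset.range_eq_Ico]]
        rw [hTdef, Finset.sum_mul]
        refine Finset.sum_congr rfl fun m hm => ?_
        rw [hd1 m (by have := Finset.mem_range.1 hm; omega)]
      have e2 : ∑ m ∈ Finset.Ico (j + 1) (k + 1), P m * d m = (T k - T j) * (-T j) := by
        rw [← hTval j k (by omega), Finset.sum_mul]
        refine Finset.sum_congr rfl fun m hm => ?_
        have := Finset.mem_Ico.1 hm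
        rw [hd2 m (by omega) (by omega)]
      have e3 : ∑ m ∈ Finset.Ico (k + 1) n, P m * d m = 0 := by
        refine Finset.sum_eq_zero fun m hm => ?_
        have := Finset.mem_Ico.1 hm
        rw [hd3 m (by omega), mul_zero]
      rw [e1, e2, e3]; ring
    set E : ℝ := ∑ m ∈ Finset.range n, qn m * d m with hEdef
    -- the key feasibility lemma for perturbations
    have hkey : ∀ t : ℝ, (∀ m, U c (m + 1) + t * d (m + 1) ≤ U c m + t * d m) →
        0 ≤ U c k + t * d k → U c 0 + t * d 0 ≤ μ →
        ((fun i : Fin n => P i.val * (U c i.val + t * d i.val)) ∈ F ∧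
          f (fun i : Fin n => P i.val * (U c i.val + t * d i.val)) = f c + t * E) := by
      intro t h1 h2 h3
      have hanti0 : Antitone (fun m => U c m + t * d m) := antitone_nat_of_succ_le h1
      have hanti : ∀ a c' : ℕ, a ≤ c' → U c c' + t * d c' ≤ U c a + t * d a :=
        fun a c' hac => hanti0 hac
      have hVnn : ∀ m, 0 ≤ U c m + t * d m := by
        intro m
        rcases le_or_gt m k with h | h
        · exact le_trans h2 (hanti m k h)
        · rw [hd3 m h, mul_zero, add_zero]
          exact hUnn c hcF m
      have hUbt : ∀ m, ∀ hm : m < n,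
          U (fun i : Fin n => P i.val * (U c i.val + t * d i.val)) m = U c m + t * d m := by
        intro m hm
        have e := hUval (fun i : Fin n => P i.val * (U c i.val + t * d i.val)) m hm
        rw [e]
        show P m * (U c m + t * d m) / P m = U c m + t * d m
        rw [mul_div_cancel_left₀ _ (hPpos m).ne']
      have hmemF : (fun i : Fin n => P i.val * (U c i.val + t * d i.val)) ∈ F := by
        rw [hFmem]
        refine ⟨?_, ?_, ?_, ?_⟩
        · calc ∑ i : Fin n, P i.val * (U c i.val + t * d i.val)
              = ∑ m ∈ Finset.range n, P m * (U c m + t * d m) :=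
                Fin.sum_univ_eq_sum_range (fun m => P m * (U c m + t * d m)) n
            _ = ∑ m ∈ Finset.range n, P m * U c m
                + t * ∑ m ∈ Finset.range n, P m * d m := by
                rw [Finset.mul_sum, ← Finset.sum_add_distrib]
                exact Finset.sum_congr rfl fun m _ => by ring
            _ = 1 := by rw [hUsum c hcF, hPD]; ring
        · intro i
          exact mul_nonneg (hPpos _).le (hVnn _)
        · show P 0 * (U c 0 + t * d 0) ≤ μ
          rw [hP0, one_mul]; exact h3
        · intro m hm
          show P (m + 1) * (U c (m + 1) + t * d (m + 1)) ≤
            ((ℓ m - 1) / ℓ m) * (P m * (U c m + t * d m))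
          rw [hPsucc m]
          have h4 := mul_le_mul_of_nonneg_left (h1 m) (mul_pos (hPpos m) (hrpos m)).le
          linarith [h4]
      refine ⟨hmemF, ?_⟩
      rw [hfU, hfU c, hEdef]
      calc ∑ m ∈ Finset.range n, qn m *
            U (fun i : Fin n => P i.val * (U c i.val + t * d i.val)) m
          = ∑ m ∈ Finset.range n, qn m * (U c m + t * d m) := by
            refine Finset.sum_congr rfl fun m hm => ?_
            rw [hUbt m (Finset.mem_range.1 hm)]
        _ = ∑ m ∈ Finset.range n, qn m * U c m
            + t * ∑ m ∈ Finset.range n, qn m * d m := by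
            rw [Finset.mul_sum, ← Finset.sum_add_distrib]
            exact Finset.sum_congr rfl fun m _ => by ring
    -- choose δ
    set δ : ℝ := min (min ((μ - U c 0) / (T k - T j)) (U c k / T j))
        ((U c j - U c (j + 1)) / T k) with hδdef
    have hδpos : 0 < δ := by
      refine lt_min (lt_min ?_ ?_) ?_
      · apply div_pos _ (by linarith)
        rw [hU0]; linarith
      · exact div_pos hUk (hTpos j)
      · exact div_pos (by linarith) (hTpos k)
    have hδ1 : δ * (T k - T j) ≤ μ - U c 0 := by
      calc δ * (T k - T j) ≤ ((μ - U c 0) / (T k - T j)) * (T k - T j) := by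
            apply mul_le_mul_of_nonneg_right _ (by linarith)
            exact le_trans (min_le_left _ _) (min_le_left _ _)
        _ = μ - U c 0 := div_mul_cancel₀ _ (by linarith : T k - T j ≠ 0)
    have hδ2 : δ * T j ≤ U c k := by
      calc δ * T j ≤ (U c k / T j) * T j := by
            apply mul_le_mul_of_nonneg_right _ (hTpos j).le
            exact le_trans (min_le_left _ _) (min_le_right _ _)
        _ = U c k := div_mul_cancel₀ _ (hTpos j).ne'
    have hδ3 : δ * T k ≤ U c j - U c (j + 1) := by
      calc δ * T k ≤ ((U c j - U c (j + 1)) / T k) * T k := by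
            apply mul_le_mul_of_nonneg_right _ (hTpos k).le
            exact min_le_right _ _
        _ = U c j - U c (j + 1) := div_mul_cancel₀ _ (hTpos k).ne'
    have hUk1 : U c (k + 1) = 0 := hafter (k + 1) (by omega)
    -- apply hkey at t = δ
    have hkey1 := hkey δ (by
        intro m
        rcases le_or_gt (m + 1) j with h | h
        · rw [hd1 (m+1) h, hd1 m (by omega)]
          have := hUanti c hcF m
          linarith
        · rcases le_or_gt m j with h' | h'
          · -- m = j
            have hmj : m = j := by omega
            subst hmj
            rw [hd1 j le_rfl, hd2 (j+1) (by omega) (by omega)]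
            have := hUanti c hcF j
            have := hTpos j
            nlinarith
          · rcases le_or_gt (m + 1) k with h'' | h''
            · rw [hd2 (m+1) (by omega) h'', hd2 m (by omega) (by omega)]
              have := hUanti c hcF m
              linarith
            · rcases le_or_gt m k with h''' | h'''
              · -- m = k
                have hmk : m = k := by omega
                subst hmk
                rw [hd3 (k+1) (by omega), hd2 k (by omega) le_rfl, hUk1]
                simp only [mul_zero, add_zero, mul_neg]
                linarith [hδ2]
              · rw [hd3 (m+1) (by omega), hd3 m h''']
                have := hUanti c hcF m
                linarith)
      (by
        rw [hd2 k (by omega) le_rfl]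
        simp only [mul_neg]
        linarith [hδ2])
      (by
        rw [hd1 0 (by omega)]
        linarith [hδ1])
    -- apply hkey at t = -δ
    have hkey2 := hkey (-δ) (by
        intro m
        rcases le_or_gt (m + 1) j with h | h
        · rw [hd1 (m+1) h, hd1 m (by omega)]
          have := hUanti c hcF m
          linarith
        · rcases le_or_gt m j with h' | h'
          · have hmj : m = j := by omega
            subst hmj
            rw [hd1 j le_rfl, hd2 (j+1) (by omega) (by omega)]
            have h5 := hδ3
            nlinarith [hTpos j, hTpos k]
          · rcases le_or_gt (m + 1) k with h'' | h''
            · rw [hd2 (m+1) (by omega) h'', hd2 m (by omega) (by omega)]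
              have := hUanti c hcF m
              linarith
            · rcases le_or_gt m k with h''' | h'''
              · have hmk : m = k := by omega
                subst hmk
                rw [hd3 (k+1) (by omega), hd2 k (by omega) le_rfl, hUk1]
                simp only [mul_zero, add_zero, mul_neg, neg_neg]
                nlinarith [hTpos j]
              · rw [hd3 (m+1) (by omega), hd3 m h''']
                have := hUanti c hcF m
                linarith)
      (by
        rw [hd2 k (by omega) le_rfl]
        simp only [mul_neg, neg_neg]
        nlinarith [hTpos j])
      (by
        rw [hd1 0 (by omega), hU0]
        nlinarith [hTjk])
    obtain ⟨hmem1, hfval1⟩ := hkey1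
    obtain ⟨hmem2, hfval2⟩ := hkey2
    have hE1 : δ * E ≤ 0 := by
      have := hopt _ hmem1
      rw [hfval1] at this
      linarith
    have hE2 : 0 ≤ δ * E := by
      have := hopt _ hmem2
      rw [hfval2] at this
      nlinarith
    have hE0 : E = 0 := by
      have : δ * E = 0 := le_antisymm hE1 hE2
      rcases mul_eq_zero.1 this with h | h
      · exact absurd h (by linarith)
      · exact h
    -- the perturbed point is also optimal but has larger first coordinate
    have hOptmem : (fun i : Fin n => P i.val * (U c i.val + δ * d i.val)) ∈ Opt := by
      refine ⟨hmem1, ?_⟩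
      show f _ = f b0
      rw [hfval1, hE0, mul_zero, add_zero, hcf]
    have hle : (fun i : Fin n => P i.val * (U c i.val + δ * d i.val)) ⟨0, h0n⟩ ≤
        c ⟨0, h0n⟩ := hcmax hOptmem
    have hval : (fun i : Fin n => P i.val * (U c i.val + δ * d i.val)) ⟨0, h0n⟩ =
        U c 0 + δ * (T k - T j) := by
      show P 0 * (U c 0 + δ * d 0) = _
      rw [hP0, hd1 0 (by omega)]
      ring
    rw [hval, ← hU0] at hle
    nlinarith [mul_pos hδpos (by linarith : (0:ℝ) < T k - T j)]
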